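/- Let ⊢⊣, → be relations on a set A such that ⊢⊣ is symmetric and → ∘ ⊢⊣* is well-founded, and let ▶ be a relation on A satisfying → ⊆ ▶ ⊆ ⊢⊣* ∘ → ∘ ⊢⊣*; write ◀ for the inverse of ▶. Then → is ▶-Church-Rosser modulo ⊢⊣* if and only if both (i) ← ∘ ▶ ⊆ ▶* ∘ ⊢⊣* ∘ ◀*, and (ii) ⊢⊣ ∘ ▶ ⊆ ▶+ ∘ ⊢⊣* ∘ ◀*. -/

import Mathlib

open Relation Multiset

namespace JK


variable {α : Type*}

/-- One-step multiset extension: remove one `a`, add a multiset `K` of elements `r`-below `a`. -/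
def Lt1 (r : α → α → Prop) (M N : Multiset α) : Prop :=
  ∃ a Z K, N = a ::ₘ Z ∧ M = Z + K ∧ ∀ b ∈ K, r b a

/-- Dershowitz–Manna ordering. -/
def DMLT (r : α → α → Prop) (M N : Multiset α) : Prop :=
  ∃ Z X Y, Y ≠ 0 ∧ N = Z + Y ∧ M = Z + X ∧ ∀ x ∈ X, ∃ y ∈ Y, r x y

theorem lt1_wf {r : α → α → Prop} (wr : WellFounded r) : WellFounded (Lt1 r) := by
  have addK : ∀ (a : α), (∀ b, r b a → ∀ N, Acc (Lt1 r) N → Acc (Lt1 r) (b ::ₘ N)) →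
      ∀ (K : Multiset α), (∀ b ∈ K, r b a) → ∀ M, Acc (Lt1 r) M → Acc (Lt1 r) (M + K) := by
    intro a ha K
    induction K using Multiset.induction with
    | empty => intro _ M hM; simpa using hM
    | cons k K ih =>
      intro hK M hM
      have h1 : Acc (Lt1 r) (M + K) := ih (fun b hb => hK b (mem_cons_of_mem hb)) M hM
      have h2 : Acc (Lt1 r) (k ::ₘ (M + K)) := ha k (hK k (mem_cons_self _ _)) _ h1
      have he : M + k ::ₘ K = k ::ₘ (M + K) := by
        (try simp only [← Multiset.singleton_add]); abel
      rwa [he]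
  have key : ∀ (a : α) (M : Multiset α), Acc (Lt1 r) M → Acc (Lt1 r) (a ::ₘ M) := by
    intro a
    induction a using wr.induction with
    | _ a iha =>
      have ha : ∀ b, r b a → ∀ N, Acc (Lt1 r) N → Acc (Lt1 r) (b ::ₘ N) := fun b hb => iha b hb
      intro M hM
      induction hM with
      | intro M hsub ihM =>
        constructor
        rintro N ⟨x, Z, K, hN, hM2, hK⟩
        subst hM2
        rcases Multiset.cons_eq_cons.1 hN with ⟨h1, h2⟩ | ⟨_, M'', hM'', hZ⟩
        · subst h1; subst h2
          exact addK a ha K hK M (Acc.intro _ hsub)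
        · have hlt : Lt1 r (M'' + K) M := ⟨x, M'', K, hM'', rfl, hK⟩
          have h3 : Acc (Lt1 r) (a ::ₘ (M'' + K)) := ihM _ hlt
          rwa [hZ, Multiset.cons_add]
  constructor
  intro M
  induction M using Multiset.induction with
  | empty =>
    constructor
    rintro N ⟨x, Z, K, hN, _, _⟩
    exact absurd hN.symm (Multiset.cons_ne_zero)
  | cons a M ih => exact key a M ih

theorem dmlt_trans_lt1 {r : α → α → Prop} :
    ∀ (n : ℕ) (Y : Multiset α), Y.card = n → Y ≠ 0 → ∀ Z X : Multiset α,
      (∀ x ∈ X, ∃ y ∈ Y, r x y) → TransGen (Lt1 r) (Z + X) (Z + Y) := by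
  intro n
  induction n using Nat.strong_induction_on with
  | _ n ihn =>
    intro Y hcard hY Z X hX
    classical
    obtain ⟨y, Y', rfl⟩ : ∃ y Y', Y = y ::ₘ Y' := by
      rcases Multiset.exists_mem_of_ne_zero hY with ⟨y, hy⟩
      exact ⟨y, _, (Multiset.cons_erase hy).symm⟩
    set X₁ := X.filter (fun x => r x y) with hX₁
    set X₂ := X.filter (fun x => ¬ r x y) with hX₂
    have hsplit : X₁ + X₂ = X := Multiset.filter_add_not _ _
    by_cases hY' : Y' = 0
    · subst hY'
      apply TransGen.single
      refine ⟨y, Z, X, ?_, rfl, ?_⟩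
      · (try simp only [← Multiset.singleton_add]); abel
      · intro b hb
        rcases hX b hb with ⟨y', hy', hr⟩
        simp only [Multiset.mem_cons, Multiset.notMem_zero, or_false] at hy'
        subst hy'; exact hr
    · have hX₂w : ∀ x ∈ X₂, ∃ y' ∈ Y', r x y' := by
        intro x hx
        have hxX : x ∈ X := Multiset.mem_of_mem_filter hx
        have hnr : ¬ r x y := (Multiset.mem_filter.1 hx).2
        rcases hX x hxX with ⟨y', hy', hr⟩
        rcases Multiset.mem_cons.1 hy' with rfl | hmem
        · exact absurd hr hnr
        · exact ⟨y', hmem, hr⟩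
      have hcard' : Y'.card < n := by
        subst hcard; simp [Multiset.card_cons]
      have step1 : TransGen (Lt1 r) ((Z + X₁) + X₂) ((Z + X₁) + Y') :=
        ihn Y'.card hcard' Y' rfl hY' (Z + X₁) X₂ hX₂w
      have step2 : Lt1 r ((Z + X₁) + Y') (Z + (y ::ₘ Y')) := by
        refine ⟨y, Z + Y', X₁, ?_, ?_, ?_⟩
        · (try simp only [← Multiset.singleton_add]); abel
        · abel
        · intro b hb; exact (Multiset.mem_filter.1 hb).2
      have heq : (Z + X₁) + X₂ = Z + X := by rw [add_assoc, hsplit]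
      exact heq ▸ TransGen.tail step1 step2

theorem dmlt_wf {r : α → α → Prop} (wr : WellFounded r) : WellFounded (DMLT r) := by
  have sub : Subrelation (DMLT r) (TransGen (Lt1 r)) := by
    rintro M N ⟨Z, X, Y, hY, rfl, rfl, hX⟩
    exact dmlt_trans_lt1 Y.card Y rfl hY Z X hX
  exact sub.wf (lt1_wf wr).transGen



section Below

variable {A : Type*} (hd ar bt : A → A → Prop)

/-- `R = → ∘ ⊢⊣*`. -/
abbrev RR : A → A → Prop := Relation.Comp ar (Relation.ReflTransGen hd)

/-- `Below z x` : `x (⊢⊣* ∘ (→ ∘ ⊢⊣*)⁺) z`, i.e. `z` is strictly below `x`. -/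
def Below (z x : A) : Prop :=
  ∃ p, Relation.ReflTransGen hd x p ∧ Relation.TransGen (RR hd ar) p z

variable {hd ar bt}

lemma rr_absorb {x y z : A} (h : RR hd ar x y) (h2 : ReflTransGen hd y z) : RR hd ar x z := by
  rcases h with ⟨m, h1, h3⟩; exact ⟨m, h1, h3.trans h2⟩

lemma rrplus_absorb {p y z : A} (h : TransGen (RR hd ar) p y) (h2 : ReflTransGen hd y z) :
    TransGen (RR hd ar) p z := by
  rcases TransGen.tail'_iff.1 h with ⟨m, hm, hlast⟩
  exact TransGen.tail' hm (rr_absorb hlast h2)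

variable (hsub2 : ∀ a b, bt a b → ∃ x y,
      Relation.ReflTransGen hd a x ∧ ar x y ∧ Relation.ReflTransGen hd y b)

include hsub2

lemma bt_decomp {a b : A} (h : bt a b) : ∃ x, ReflTransGen hd a x ∧ RR hd ar x b := by
  rcases hsub2 a b h with ⟨x, y, h1, h2, h3⟩; exact ⟨x, h1, ⟨y, h2, h3⟩⟩

lemma btplus_to_rr {x z : A} (h : TransGen bt x z) :
    ∃ p, ReflTransGen hd x p ∧ TransGen (RR hd ar) p z := by
  induction h using TransGen.head_induction_on with
  | single h => rcases bt_decomp hsub2 h with ⟨p, h1, h2⟩; exact ⟨p, h1, TransGen.single h2⟩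
  | head h _ IH =>
    rcases IH with ⟨p', h1', h2'⟩
    rcases bt_decomp hsub2 h with ⟨p, h1, h2⟩
    exact ⟨p, h1, TransGen.head (rr_absorb h2 h1') h2'⟩

/-- Main constructor for `Below`. -/
lemma below_of {q x z : A} (h1 : ReflTransGen hd q x) (h2 : TransGen bt x z) :
    Below hd ar z q := by
  rcases btplus_to_rr hsub2 h2 with ⟨p, hp1, hp2⟩
  exact ⟨p, h1.trans hp1, hp2⟩

omit hsub2 in
lemma below_hdL {q' q z : A} (h : ReflTransGen hd q' q) (hb : Below hd ar z q) :
    Below hd ar z q' := by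
  rcases hb with ⟨p, h1, h2⟩; exact ⟨p, h.trans h1, h2⟩

omit hsub2 in
lemma below_step_hd {q z w : A} (hb : Below hd ar z q) (h : ReflTransGen hd z w) :
    Below hd ar w q := by
  rcases hb with ⟨p, h1, h2⟩; exact ⟨p, h1, rrplus_absorb h2 h⟩

lemma below_step_bt {q z w : A} (hb : Below hd ar z q) (h : bt z w) : Below hd ar w q := by
  rcases hb with ⟨p, h1, h2⟩
  rcases bt_decomp hsub2 h with ⟨pz, hz1, hz2⟩
  exact ⟨p, h1, TransGen.tail (rrplus_absorb h2 hz1) hz2⟩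

lemma below_btstar {q z w : A} (hb : Below hd ar z q) (h : ReflTransGen bt z w) :
    Below hd ar w q := by
  induction h with
  | refl => exact hb
  | tail _ h IH => exact below_step_bt hsub2 IH h

omit hsub2 in
lemma wf_flip_rr (hwf : ¬ ∃ f : ℕ → A, ∀ n, RR hd ar (f n) (f (n + 1))) :
    WellFounded (fun x y => RR hd ar y x) := by
  classical
  by_contra h
  have hex : ∃ a, ¬ Acc (fun x y => RR hd ar y x) a := by
    by_contra h2
    push_neg at h2
    exact h ⟨h2⟩
  obtain ⟨a, ha⟩ := hex
  have step : ∀ x, ¬ Acc (fun x y => RR hd ar y x) x →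
      ∃ y, RR hd ar x y ∧ ¬ Acc (fun x y => RR hd ar y x) y := by
    intro x hx
    by_contra hy
    push_neg at hy
    exact hx (Acc.intro x (fun y hxy => hy y hxy))
  let g : ℕ → {x : A // ¬ Acc (fun x y => RR hd ar y x) x} :=
    fun n => Nat.rec ⟨a, ha⟩ (fun _ p => ⟨(step p.1 p.2).choose,
      (step p.1 p.2).choose_spec.2⟩) n
  refine hwf ⟨fun n => (g n).1, fun n => ?_⟩
  exact (step (g n).1 (g n).2).choose_spec.1

omit hsub2 in
lemma wf_below (hwf : ¬ ∃ f : ℕ → A, ∀ n, RR hd ar (f n) (f (n + 1))) :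
    WellFounded (Below hd ar) := by
  have wf1 : WellFounded (fun x y => RR hd ar y x) := wf_flip_rr hwf
  have wf2 : WellFounded (fun u v => TransGen (RR hd ar) v u) := by
    refine Subrelation.wf (r := TransGen (fun x y => RR hd ar y x)) ?_ wf1.transGen
    intro u v h
    exact TransGen.swap _ _ h
  have key : ∀ p, Acc (fun u v => TransGen (RR hd ar) v u) p →
      ∀ z, TransGen (RR hd ar) p z → Acc (Below hd ar) z := by
    intro p hp
    induction hp with
    | intro p _ IH =>
      intro z hpz
      constructor
      rintro w ⟨p', h1, h2⟩
      exact IH p' (rrplus_absorb hpz h1) w h2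
  constructor
  intro z
  constructor
  rintro w ⟨p, h1, h2⟩
  exact key p (wf2.apply p) w h2

end Below



variable {A : Type*}

/-- Measured conversations: `fwd` contributes its source, `bwd` contributes its
(bt-)source, `eq` contributes both endpoints. -/
inductive ConvM (hd bt : A → A → Prop) : A → A → Multiset A → Prop
  | refl (a) : ConvM hd bt a a 0
  | fwd {a b c M} : bt a b → ConvM hd bt b c M → ConvM hd bt a c (a ::ₘ M)
  | bwd {a b c M} : bt b a → ConvM hd bt b c M → ConvM hd bt a c (b ::ₘ M)
  | eq  {a b c M} : hd a b → ConvM hd bt b c M → ConvM hd bt a c (a ::ₘ b ::ₘ M)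

namespace ConvM

variable {hd bt : A → A → Prop}

lemma append {a b c : A} {M N : Multiset A} (h1 : ConvM hd bt a b M)
    (h2 : ConvM hd bt b c N) : ConvM hd bt a c (M + N) := by
  induction h1 with
  | refl a => simpa using h2
  | fwd h _ IH => rw [Multiset.cons_add]; exact .fwd h (IH h2)
  | bwd h _ IH => rw [Multiset.cons_add]; exact .bwd h (IH h2)
  | eq h _ IH => rw [Multiset.cons_add, Multiset.cons_add]; exact .eq h (IH h2)

/-- Forward chain `a ▶* b`; all contributed elements are `bt*`-reachable from `a`. -/
lemma fwdStar {a b : A} (h : ReflTransGen bt a b) :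
    ∃ M, ConvM hd bt a b M ∧ ∀ z ∈ M, ReflTransGen bt a z := by
  induction h using ReflTransGen.head_induction_on with
  | refl => exact ⟨0, .refl b, by simp⟩
  | @head a' m hab hmb IH =>
    rcases IH with ⟨M, hM, hspec⟩
    refine ⟨a' ::ₘ M, .fwd hab hM, ?_⟩
    intro z hz
    rcases Multiset.mem_cons.1 hz with rfl | hz'
    · exact ReflTransGen.refl
    · exact ReflTransGen.head hab (hspec z hz')

/-- Forward chain from `a ▶⁺ b`: measure is `a` plus elements strictly `bt⁺`-below `a`. -/
lemma fwdPlus {a b : A} (h : TransGen bt a b) :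
    ∃ K, ConvM hd bt a b (a ::ₘ K) ∧ ∀ z ∈ K, TransGen bt a z := by
  rcases TransGen.head'_iff.1 h with ⟨m, ham, hmb⟩
  rcases fwdStar (hd := hd) hmb with ⟨M, hM, hspec⟩
  exact ⟨M, .fwd ham hM, fun z hz => TransGen.head' ham (hspec z hz)⟩

/-- Backward chain: conversation from `b` to `a` given `a ▶* b`;
contributed elements are `bt*`-reachable from `a`. -/
lemma bwdStar {a b : A} (h : ReflTransGen bt a b) :
    ∃ M, ConvM hd bt b a M ∧ ∀ z ∈ M, ReflTransGen bt a z := by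
  induction h with
  | refl => exact ⟨0, .refl a, by simp⟩
  | @tail m b' _hm hmb IH =>
    rcases IH with ⟨M, hM, hspec⟩
    refine ⟨m ::ₘ M, .bwd hmb hM, ?_⟩
    intro z hz
    rcases Multiset.mem_cons.1 hz with rfl | hz'
    · exact _hm
    · exact hspec z hz'

/-- Backward chain from `a ▶⁺ b`: conversation from `b` to `a`; measure is `a` plus
elements strictly below `a`. -/
lemma bwdPlus {a b : A} (h : TransGen bt a b) :
    ∃ K, ConvM hd bt b a (a ::ₘ K) ∧ ∀ z ∈ K, TransGen bt a z := by
  induction h with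
  | single hab => exact ⟨0, .bwd hab (.refl _), by simp⟩
  | @tail m b' hm hmb IH =>
    rcases IH with ⟨K, hK, hspec⟩
    refine ⟨m ::ₘ K, ?_, ?_⟩
    · have : ConvM hd bt b' m (m ::ₘ 0) := .bwd hmb (.refl m)
      have h2 := this.append hK
      have he : (m ::ₘ (0 : Multiset A)) + (a ::ₘ K) = a ::ₘ m ::ₘ K := by
        (try simp only [← Multiset.singleton_add]); abel
      rwa [he] at h2
    · intro z hz
      rcases Multiset.mem_cons.1 hz with rfl | hz'
      · exact hm
      · exact hspec z hz'

/-- Equality chain `a ⊢⊣* b`: contributed elements are `hd*`-reachable from `a`. -/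
lemma eqChain {a b : A} (h : ReflTransGen hd a b) :
    ∃ M, ConvM hd bt a b M ∧ ∀ z ∈ M, ReflTransGen hd a z := by
  induction h using ReflTransGen.head_induction_on with
  | refl => exact ⟨0, .refl b, by simp⟩
  | @head a' m hab hmb IH =>
    rcases IH with ⟨M, hM, hspec⟩
    refine ⟨a' ::ₘ m ::ₘ M, .eq hab hM, ?_⟩
    intro z hz
    rcases Multiset.mem_cons.1 hz with rfl | hz'
    · exact ReflTransGen.refl
    · rcases Multiset.mem_cons.1 hz' with rfl | hz''
      · exact ReflTransGen.single hab
      · exact ReflTransGen.head hab (hspec z hz'')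

end ConvM


section MAIN

variable {A : Type*} {hd ar bt : A → A → Prop}

def Valley (hd bt : A → A → Prop) (a c : A) : Prop :=
  ∃ u v, ReflTransGen bt a u ∧ ReflTransGen hd u v ∧ ReflTransGen bt c v

variable (hsym : ∀ a b, hd a b → hd b a)
  (hsub1 : ∀ a b, ar a b → bt a b)
  (hsub2 : ∀ a b, bt a b → ∃ x y,
      Relation.ReflTransGen hd a x ∧ ar x y ∧ Relation.ReflTransGen hd y b)
  (cond1 : ∀ a b c, ar b a → bt b c → Valley hd bt a c)
  (cond2 : ∀ a b c, hd a b → bt b c →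
      ∃ u v, TransGen bt a u ∧ ReflTransGen hd u v ∧ ReflTransGen bt c v)

include hsym in
lemma hdstar_symm {a b : A} (h : ReflTransGen hd a b) : ReflTransGen hd b a := by
  induction h with
  | refl => exact .refl
  | tail _ h2 IH => exact ReflTransGen.head (hsym _ _ h2) IH

include hsym hsub2 cond2 in
/-- Transport lemma. -/
lemma transport {q : A}
    (HV : ∀ a' c' (N : Multiset A), ConvM hd bt a' c' N →
        (∀ z ∈ N, Below hd ar z q) → Valley hd bt a' c')
    {r : A} (hqr : bt q r) :
    ∀ x, ReflTransGen hd q x →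
      ∃ U V, TransGen bt x U ∧ ReflTransGen hd U V ∧ ReflTransGen bt r V := by
  intro x hqx
  induction hqx with
  | refl => exact ⟨r, r, TransGen.single hqr, .refl, .refl⟩
  | @tail z z' hqz hzz' IH =>
    obtain ⟨U', V', hU', hUV', hrV'⟩ := IH
    obtain ⟨w, hzw, hwU'⟩ := TransGen.head'_iff.1 hU'
    obtain ⟨p, q', hp, hpq', hwq'⟩ := cond2 z' z w (hsym z z' hzz') hzw
    -- first auxiliary conversation : q' ⇐* w ⇒* U' ⊢⊣* V'
    obtain ⟨M1, C1, spec1⟩ := ConvM.bwdStar (hd := hd) hwq'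
    obtain ⟨M2, C2, spec2⟩ := ConvM.fwdStar (hd := hd) hwU'
    obtain ⟨M3, C3, spec3⟩ := ConvM.eqChain (bt := bt) hUV'
    have hbel_w : ∀ zz, ReflTransGen bt w zz → Below hd ar zz q := fun zz hzz =>
      below_of hsub2 hqz (TransGen.head' hzw hzz)
    have hv1 : Valley hd bt q' V' := by
      refine HV _ _ _ (C1.append (C2.append C3)) ?_
      intro zz hzz
      rcases Multiset.mem_add.1 hzz with h1 | h1
      · exact hbel_w zz (spec1 zz h1)
      · rcases Multiset.mem_add.1 h1 with h2 | h2
        · exact hbel_w zz (spec2 zz h2)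
        · exact below_step_hd (below_of hsub2 hqz hU') (spec3 zz h2)
    obtain ⟨s, t, hq's, hst, hV't⟩ := hv1
    -- second auxiliary conversation : p ⊢⊣* q' ⇒* s ⊢⊣* t
    obtain ⟨N1, D1, tspec1⟩ := ConvM.eqChain (bt := bt) hpq'
    obtain ⟨N2, D2, tspec2⟩ := ConvM.fwdStar (hd := hd) hq's
    obtain ⟨N3, D3, tspec3⟩ := ConvM.eqChain (bt := bt) hst
    have hbel_p : Below hd ar p q := below_of hsub2 (hqz.tail hzz') hp
    have hbel_q' : Below hd ar q' q := below_step_hd hbel_p hpq'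
    have hv2 : Valley hd bt p t := by
      refine HV _ _ _ (D1.append (D2.append D3)) ?_
      intro zz hzz
      rcases Multiset.mem_add.1 hzz with h1 | h1
      · exact below_step_hd hbel_p (tspec1 zz h1)
      · rcases Multiset.mem_add.1 h1 with h2 | h2
        · exact below_btstar hsub2 hbel_q' (tspec2 zz h2)
        · exact below_step_hd (below_btstar hsub2 hbel_q' hq's) (tspec3 zz h2)
    obtain ⟨e, f, hpe, hef, htf⟩ := hv2
    exact ⟨e, f, TransGen.trans_left hp hpe, hef, (hrV'.trans hV't).trans htf⟩

include hsym hsub1 hsub2 cond1 cond2 in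
lemma loop2 (μ : Multiset A)
    (IH : ∀ ν, DMLT (Below hd ar) ν μ →
        ∀ a c (M : Multiset A), ConvM hd bt a c M → M = ν → Valley hd bt a c) :
    ∀ {cur c Ms}, ConvM hd bt cur c Ms → ∀ a b0 prev (Pprev : Multiset A),
      (∀ c' (N : Multiset A), ConvM hd bt prev c' N → ConvM hd bt a c' (Pprev + N)) →
      bt cur prev → ReflTransGen hd a b0 → ReflTransGen bt prev b0 →
      μ = Pprev + (cur ::ₘ Ms) → Valley hd bt a c := by
  intro cur c Ms hS
  induction hS with
  | refl =>
    intro a b0 prev Pprev reb hlast hab hprevb hmu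
    exact ⟨a, b0, .refl, hab, ReflTransGen.head hlast hprevb⟩
  | @bwd cur' e c' M' h S' IHS' =>
    intro a b0 prev Pprev reb hlast hab hprevb hmu
    refine IHS' a b0 cur' (Pprev + (cur' ::ₘ 0)) ?_ h hab
      (ReflTransGen.head hlast hprevb) ?_
    · intro c'' N T
      have h2 := reb c'' (cur' ::ₘ N) (ConvM.bwd hlast T)
      have he : Pprev + (cur' ::ₘ N) = Pprev + (cur' ::ₘ 0) + N := by
        (try simp only [← Multiset.singleton_add]); abel
      rwa [he] at h2
    · rw [hmu]; (try simp only [← Multiset.singleton_add]); abel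
  | @fwd cur' r c' M' h S' _ =>
    intro a b0 prev Pprev reb hlast hab hprevb hmu
    -- peak  prev ⇐ cur' ⇒ r
    have hcur_mem : cur' ∈ μ := by rw [hmu]; simp
    have HV : ∀ a' c'' (N : Multiset A), ConvM hd bt a' c'' N →
        (∀ z ∈ N, Below hd ar z cur') → Valley hd bt a' c'' := by
      intro a' c'' N hN hmem
      refine IH N ⟨0, N, μ, ?_, by simp, by simp, fun x hx => ⟨cur', hcur_mem, hmem x hx⟩⟩
        a' c'' N hN rfl
      intro h0
      rw [h0] at hcur_mem
      exact absurd hcur_mem (Multiset.notMem_zero _)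
    obtain ⟨x, y, hcx, hxy, hyprev⟩ := hsub2 cur' prev hlast
    obtain ⟨U, V, hxU, hUV, hrV⟩ :=
      transport hsym hsub2 cond2 HV h x hcx
    obtain ⟨w0, hxw0, hw0U⟩ := TransGen.head'_iff.1 hxU
    obtain ⟨s0, t0, hys0, hs0t0, hw0t0⟩ := cond1 y x w0 hxy hxw0
    obtain ⟨E1, CE1, specE1⟩ := ConvM.eqChain (bt := bt) (hdstar_symm hsym hyprev)
    obtain ⟨F1, CF1, specF1⟩ := ConvM.fwdStar (hd := hd) hys0
    obtain ⟨E2, CE2, specE2⟩ := ConvM.eqChain (bt := bt) hs0t0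
    obtain ⟨B1, CB1, specB1⟩ := ConvM.bwdStar (hd := hd) hw0t0
    obtain ⟨F2, CF2, specF2⟩ := ConvM.fwdStar (hd := hd) hw0U
    obtain ⟨E3, CE3, specE3⟩ := ConvM.eqChain (bt := bt) hUV
    obtain ⟨B2, CB2, specB2⟩ := ConvM.bwdStar (hd := hd) hrV
    have Seg := CE1.append (CF1.append (CE2.append (CB1.append (CF2.append (CE3.append CB2)))))
    have conv_new := reb c' _ (Seg.append S')
    -- Below facts
    have hbel_prev : Below hd ar prev cur' := below_of hsub2 .refl (TransGen.single hlast)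
    have hbel_y : Below hd ar y cur' := below_of hsub2 hcx (TransGen.single (hsub1 x y hxy))
    have hbel_w0 : Below hd ar w0 cur' := below_of hsub2 hcx (TransGen.single hxw0)
    have hbel_r : Below hd ar r cur' := below_of hsub2 .refl (TransGen.single h)
    have hmem : ∀ z ∈ E1 + (F1 + (E2 + (B1 + (F2 + (E3 + B2))))), Below hd ar z cur' := by
      intro z hz
      rcases Multiset.mem_add.1 hz with h1 | h1
      · exact below_step_hd (below_of hsub2 .refl (TransGen.single hlast)) (specE1 z h1)
      · rcases Multiset.mem_add.1 h1 with h2 | h1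
        · exact below_btstar hsub2 hbel_y (specF1 z h2)
        · rcases Multiset.mem_add.1 h1 with h2 | h1
          · exact below_step_hd (below_btstar hsub2 hbel_y hys0) (specE2 z h2)
          · rcases Multiset.mem_add.1 h1 with h2 | h1
            · exact below_btstar hsub2 hbel_w0 (specB1 z h2)
            · rcases Multiset.mem_add.1 h1 with h2 | h1
              · exact below_btstar hsub2 hbel_w0 (specF2 z h2)
              · rcases Multiset.mem_add.1 h1 with h2 | h2
                · exact below_step_hd (below_btstar hsub2 hbel_w0 hw0U) (specE3 z h2)
                · exact below_btstar hsub2 hbel_r (specB2 z h2)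
    refine IH _ ?_ a c' _ conv_new rfl
    refine ⟨Pprev + M', E1 + (F1 + (E2 + (B1 + (F2 + (E3 + B2))))),
      cur' ::ₘ cur' ::ₘ 0, by simp, ?_, ?_, ?_⟩
    · rw [hmu]; (try simp only [← Multiset.singleton_add]); abel
    · (try simp only [← Multiset.singleton_add]); abel
    · intro z hz
      exact ⟨cur', by simp, hmem z hz⟩
  | @eq cur' r c' M' h S' _ =>
    intro a b0 prev Pprev reb hlast hab hprevb hmu
    obtain ⟨U, V, hrU, hUV, hprevV⟩ := cond2 r cur' prev (hsym cur' r h) hlast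
    obtain ⟨F, CF, specF⟩ := ConvM.fwdStar (hd := hd) hprevV
    obtain ⟨E, CE, specE⟩ := ConvM.eqChain (bt := bt) (hdstar_symm hsym hUV)
    obtain ⟨K, CK, specK⟩ := ConvM.bwdPlus (hd := hd) hrU
    have Seg := CF.append (CE.append CK)
    have conv_new := reb c' _ (Seg.append S')
    have hbel_U : Below hd ar U cur' := below_of hsub2 (ReflTransGen.single h) hrU
    refine IH _ ?_ a c' _ conv_new rfl
    refine ⟨Pprev + M' + (r ::ₘ 0), F + (E + K), cur' ::ₘ cur' ::ₘ 0, by simp, ?_, ?_, ?_⟩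
    · rw [hmu]; (try simp only [← Multiset.singleton_add]); abel
    · (try simp only [← Multiset.singleton_add]); abel
    · intro z hz
      refine ⟨cur', by simp, ?_⟩
      rcases Multiset.mem_add.1 hz with h1 | h1
      · exact below_btstar hsub2 (below_of hsub2 .refl (TransGen.single hlast)) (specF z h1)
      · rcases Multiset.mem_add.1 h1 with h2 | h2
        · exact below_step_hd (below_step_hd hbel_U hUV) (specE z h2)
        · exact below_of hsub2 (ReflTransGen.single h) (specK z h2)

include hsym hsub1 hsub2 cond1 cond2 in
lemma loop1 (μ : Multiset A)
    (IH : ∀ ν, DMLT (Below hd ar) ν μ →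
        ∀ a c (M : Multiset A), ConvM hd bt a c M → M = ν → Valley hd bt a c) :
    ∀ {b c Ms}, ConvM hd bt b c Ms → ∀ a a' (P' : Multiset A),
      (∀ c' (N : Multiset A), ConvM hd bt a' c' N → ConvM hd bt a c' (P' + N)) →
      hd a' b → ReflTransGen hd a b →
      μ = P' + (a' ::ₘ b ::ₘ Ms) → Valley hd bt a c := by
  intro b c Ms hS
  induction hS with
  | refl =>
    intro a a' P' reb hlast hab hmu
    exact ⟨a, _, .refl, hab, .refl⟩
  | @eq b' b2 c' M' h S' IHS' =>
    intro a a' P' reb hlast hab hmu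
    refine IHS' a b' (P' + (a' ::ₘ b' ::ₘ 0)) ?_ h (hab.tail h) ?_
    · intro c'' N T
      have h2 := reb c'' (a' ::ₘ b' ::ₘ N) (ConvM.eq hlast T)
      have he : P' + (a' ::ₘ b' ::ₘ N) = P' + (a' ::ₘ b' ::ₘ 0) + N := by
        (try simp only [← Multiset.singleton_add]); abel
      rwa [he] at h2
    · rw [hmu]; (try simp only [← Multiset.singleton_add]); abel
  | @fwd b' d c' M' h S' _ =>
    intro a a' P' reb hlast hab hmu
    obtain ⟨U, V, ha'U, hUV, hdV⟩ := cond2 a' b' d hlast h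
    obtain ⟨K, CK, specK⟩ := ConvM.fwdPlus (hd := hd) ha'U
    obtain ⟨E, CE, specE⟩ := ConvM.eqChain (bt := bt) hUV
    obtain ⟨B, CB, specB⟩ := ConvM.bwdStar (hd := hd) hdV
    have Seg := CK.append (CE.append CB)
    have conv_new := reb c' _ (Seg.append S')
    have hba' : ReflTransGen hd b' a' := ReflTransGen.single (hsym a' b' hlast)
    have hbel_U : Below hd ar U b' := below_of hsub2 hba' ha'U
    refine IH _ ?_ a c' _ conv_new rfl
    refine ⟨P' + M' + (a' ::ₘ 0), K + (E + B), b' ::ₘ b' ::ₘ 0, by simp, ?_, ?_, ?_⟩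
    · rw [hmu]; (try simp only [← Multiset.singleton_add]); abel
    · (try simp only [← Multiset.singleton_add]); abel
    · intro z hz
      refine ⟨b', by simp, ?_⟩
      rcases Multiset.mem_add.1 hz with h1 | h1
      · exact below_of hsub2 hba' (specK z h1)
      · rcases Multiset.mem_add.1 h1 with h2 | h2
        · exact below_step_hd hbel_U (specE z h2)
        · exact below_btstar hsub2 (below_of hsub2 .refl (TransGen.single h)) (specB z h2)
  | @bwd b' d c' M' h S' _ =>
    intro a a' P' reb hlast hab hmu
    refine loop2 hsym hsub1 hsub2 cond1 cond2 μ IH S' a b' b' (P' + (a' ::ₘ b' ::ₘ 0))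
      ?_ h hab .refl ?_
    · intro c'' N T
      have h2 := reb c'' (a' ::ₘ b' ::ₘ N) (ConvM.eq hlast T)
      have he : P' + (a' ::ₘ b' ::ₘ N) = P' + (a' ::ₘ b' ::ₘ 0) + N := by
        (try simp only [← Multiset.singleton_add]); abel
      rwa [he] at h2
    · rw [hmu]; (try simp only [← Multiset.singleton_add]); abel

include hsym hsub1 hsub2 cond1 cond2 in
lemma main_valley (hwf : ¬ ∃ f : ℕ → A, ∀ n, RR hd ar (f n) (f (n + 1))) :
    ∀ a c (M : Multiset A), ConvM hd bt a c M → Valley hd bt a c := by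
  have H : ∀ μ a c (M : Multiset A), ConvM hd bt a c M → M = μ → Valley hd bt a c := by
    intro μ
    induction μ using (dmlt_wf (wf_below hwf)).induction with
    | _ μ IH =>
      intro a c M hconv hM
      subst hM
      cases hconv with
      | refl => exact ⟨a, a, .refl, .refl, .refl⟩
      | @fwd _ b _ M' h S' =>
        have hdm : DMLT (Below hd ar) M' (a ::ₘ M') :=
          ⟨M', 0, a ::ₘ 0, by simp, by (try simp only [← Multiset.singleton_add]); abel, by simp, by simp⟩
        obtain ⟨u, v, h1, h2, h3⟩ := IH M' hdm b c M' S' rfl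
        exact ⟨u, v, ReflTransGen.head h h1, h2, h3⟩
      | @eq _ b _ M' h S' =>
        refine loop1 hsym hsub1 hsub2 cond1 cond2 _ IH S' a a 0 ?_ h (.single h) (by simp)
        intro c'' N T
        simpa using T
      | @bwd _ b _ M' h S' =>
        refine loop2 hsym hsub1 hsub2 cond1 cond2 _ IH S' a a a 0 ?_ h .refl .refl (by simp)
        intro c'' N T
        simpa using T
  exact fun a c M hM => H M a c M hM rfl

end MAIN

end JK

open JK
/-- Corollary 2.12 (Theorem 5 of Jouannaud–Kirchner 1986):
`→` is `▶`-Church-Rosser modulo `⊢⊣*` iff conditions (i) and (ii) hold.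
Here `⋈ = ↔ ∪ ⊢⊣` is built from `→` (not from `▶`). -/
theorem bt_church_rosser_modulo_iff {A : Type*} (hd ar bt : A → A → Prop)
    (hsym : ∀ a b, hd a b → hd b a)
    (hwf : ¬ ∃ f : ℕ → A, ∀ n,
      Relation.Comp ar (Relation.ReflTransGen hd) (f n) (f (n + 1)))
    (hsub1 : ∀ a b, ar a b → bt a b)
    (hsub2 : ∀ a b, bt a b → ∃ x y,
      Relation.ReflTransGen hd a x ∧ ar x y ∧ Relation.ReflTransGen hd y b) :
    (∀ a b, Relation.ReflTransGen (fun x y => ar x y ∨ ar y x ∨ hd x y) a b →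
      ∃ u v, Relation.ReflTransGen bt a u ∧ Relation.ReflTransGen hd u v ∧
        Relation.ReflTransGen bt b v)
    ↔
    ((∀ a b c, ar b a → bt b c →
      ∃ u v, Relation.ReflTransGen bt a u ∧ Relation.ReflTransGen hd u v ∧
        Relation.ReflTransGen bt c v) ∧
     (∀ a b c, hd a b → bt b c →
      ∃ u v, Relation.TransGen bt a u ∧ Relation.ReflTransGen hd u v ∧
        Relation.ReflTransGen bt c v)) := by
  have bt_join : ∀ x y, bt x y →
      ReflTransGen (fun x y => ar x y ∨ ar y x ∨ hd x y) x y := by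
    intro x y h
    obtain ⟨p, q, h1, h2, h3⟩ := hsub2 x y h
    refine ReflTransGen.trans (ReflTransGen.mono ?_ _ _ h1)
      (ReflTransGen.trans (ReflTransGen.single (Or.inl h2)) (ReflTransGen.mono ?_ _ _ h3))
    · exact fun a b hab => Or.inr (Or.inr hab)
    · exact fun a b hab => Or.inr (Or.inr hab)
  constructor
  · intro CR
    constructor
    · -- condition (i)
      intro a b c hba hbc
      refine CR a c (ReflTransGen.head (Or.inr (Or.inl hba)) (bt_join b c hbc))
    · -- condition (ii)
      intro a b c hab hbc
      have hchain : ReflTransGen (fun x y => ar x y ∨ ar y x ∨ hd x y) a c :=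
        ReflTransGen.head (Or.inr (Or.inr hab)) (bt_join b c hbc)
      obtain ⟨u, v, h1, h2, h3⟩ := CR a c hchain
      rcases ReflTransGen.cases_head h1 with rfl | ⟨w, haw, hwu⟩
      · -- empty left leg: derive a cycle, contradicting well-foundedness
        exfalso
        have irr : ∀ x, ¬ Below hd ar x x := fun x =>
          (wf_below (ar := ar) hwf).induction (C := fun y => ¬ Below hd ar y y) x
            (fun y IH hy => IH y hy hy)
        have hvb : ReflTransGen hd v b :=
          (hdstar_symm hsym h2).tail hab
        have hbv : TransGen bt b v := TransGen.head' hbc h3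
        exact irr v (below_of hsub2 hvb hbv)
      · exact ⟨u, v, TransGen.head' haw hwu, h2, h3⟩
  · rintro ⟨cond1, cond2⟩
    intro a b hab
    have hconv : ∃ M, ConvM hd bt a b M := by
      clear cond1 cond2
      induction hab with
      | refl => exact ⟨0, .refl a⟩
      | @tail m b' _ hmb IH =>
        obtain ⟨M, C⟩ := IH
        rcases hmb with h | h | h
        · exact ⟨_, C.append (ConvM.fwd (hsub1 _ _ h) (.refl b'))⟩
        · exact ⟨_, C.append (ConvM.bwd (hsub1 _ _ h) (.refl b'))⟩
        · exact ⟨_, C.append (ConvM.eq h (.refl b'))⟩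
    obtain ⟨M, C⟩ := hconv
    exact main_valley hsym hsub1 hsub2 cond1 cond2 hwf a b M C
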